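/- Let H be a circulant n×n matrix with seed supported on the first N_f positions and Φ the first m rows of circulant C with N_f ≤ m. Then the last N_f − 1 rows of the m-partial commutator [Φ,H]_m = ΦH − H̃Φ are in general nonzero: specifically, if the seed entry h_{N_f} ≠ 0 and the seed of C is nonzero, then there exists an index i with m − N_f + 1 < i ≤ m and a column j such that ([Φ,H]_m)_{i,j} ≠ 0. -/

import Mathlib

/-- The n×n circulant matrix with seed `c` (paper convention `C i j = c (j - i)`). -/
def circ {n : ℕ} (c : ZMod n → ℝ) : Matrix (ZMod n) (ZMod n) ℝ :=
  Matrix.of fun i j => c (j - i)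

/-- Sharpness of Theorem 1: with a filter seed `h` supported on the first `Nf` entries,
`h_{Nf} ≠ 0` (0-indexed `h (Nf - 1) ≠ 0`), a nonzero sensing seed `c`, and `Φ` the first
`m` rows of the proper partial circulant `circ c` (`m < n`), some entry of one of the
last `Nf - 1` rows (0-indexed rows `i ≥ m - Nf + 1`) of the m-partial commutator
`[Φ,H]_m = Φ H - H̃ Φ` is nonzero. -/
theorem partial_commutator_last_rows_nonzero {n m Nf : ℕ} [NeZero n]
    (hNf2 : 2 ≤ Nf) (hNfm : Nf ≤ m) (hmn : m < n)
    (c h : ZMod n → ℝ) (hsupp : ∀ j : ZMod n, Nf ≤ j.val → h j = 0)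
    (hNfne : h (((Nf - 1 : ℕ) : ZMod n)) ≠ 0) (hcne : c ≠ 0)
    (Φ : Matrix (Fin m) (ZMod n) ℝ)
    (hΦ : ∀ (i : Fin m) (j : ZMod n), Φ i j = circ c ((i.val : ZMod n)) j)
    (Htil : Matrix (Fin m) (Fin m) ℝ)
    (hHtil : ∀ i j : Fin m, Htil i j = circ h ((i.val : ZMod n)) ((j.val : ZMod n))) :
    ∃ (i : Fin m) (k : ZMod n), m - Nf + 1 ≤ i.val ∧
      (Φ * circ h - Htil * Φ) i k ≠ 0 := by
  obtain ⟨j0, hj0⟩ := Function.ne_iff.mp hcne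
  set i0 : ℕ := m - Nf + 1 with hi0def
  have hi0m : i0 < m := by omega
  set iZ : ZMod n := (i0 : ZMod n) with hiZ
  set k : ZMod n := j0 + (m : ZMod n) with hk
  refine ⟨⟨i0, hi0m⟩, k, le_refl _, ?_⟩
  -- helper lemmas
  have hsub : ∀ (j : ZMod n) (a : ℕ), a ≤ j.val →
      j - (a : ZMod n) = ((j.val - a : ℕ) : ZMod n) := by
    intro j a ha
    conv_lhs => rw [← ZMod.natCast_rightInverse j]
    push_cast [ha]; ring
  set f : ZMod n → ℝ := fun j => h (j - iZ) * c (k - j) with hf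
  set T : Finset (ZMod n) := (Finset.range m).image (Nat.cast) with hT
  -- Step A+B: first product
  have hA : (Φ * circ h) ⟨i0, hi0m⟩ k = ∑ j : ZMod n, f j := by
    rw [Matrix.mul_apply]
    simp only [hΦ, circ, Matrix.of_apply]
    refine Fintype.sum_equiv (Equiv.subLeft (iZ + k)) _ _ ?_
    intro x
    simp only [Equiv.subLeft_apply, hf]
    have e1 : iZ + k - x - iZ = k - x := by ring
    have e2 : k - (iZ + k - x) = x - iZ := by ring
    rw [e1, e2, mul_comm]
  -- Step C: second product as a sum over T
  have hC : (Htil * Φ) ⟨i0, hi0m⟩ k = ∑ x ∈ T, f x := by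
    rw [Matrix.mul_apply]
    have : ∀ j : Fin m, Htil ⟨i0, hi0m⟩ j * Φ j k = f ((j.val : ZMod n)) := by
      intro j
      simp only [hHtil, hΦ, circ, Matrix.of_apply, hf]
      rfl
    simp only [this]
    rw [Finset.sum_image]
    · exact (Fin.sum_univ_eq_sum_range (fun j => f ((j : ℕ) : ZMod n)) m).symm ▸
        (Fin.sum_univ_eq_sum_range (fun j => f ((j : ℕ) : ZMod n)) m)
    · intro a ha b hb hab
      have : ((a : ZMod n)).val = ((b : ZMod n)).val := by rw [hab]
      rwa [ZMod.val_cast_of_lt (by simp at ha; omega),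
        ZMod.val_cast_of_lt (by simp at hb; omega)] at this
  -- combine
  have hD : (Φ * circ h - Htil * Φ) ⟨i0, hi0m⟩ k = ∑ x ∈ Finset.univ \ T, f x := by
    rw [Matrix.sub_apply, hA, hC, Finset.sum_sdiff_eq_sub (Finset.subset_univ T)]
  rw [hD]
  -- membership facts about T
  have hmemT : ∀ x : ZMod n, x ∈ T ↔ x.val < m := by
    intro x
    constructor
    · rintro hx
      simp only [hT, Finset.mem_image, Finset.mem_range] at hx
      obtain ⟨a, ha, rfl⟩ := hx
      rwa [ZMod.val_cast_of_lt (by omega)]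
    · intro hx
      simp only [hT, Finset.mem_image, Finset.mem_range]
      exact ⟨x.val, hx, ZMod.natCast_rightInverse x⟩
  have hval_m : ((m : ZMod n)).val = m := ZMod.val_cast_of_lt hmn
  have hmem : (m : ZMod n) ∈ Finset.univ \ T := by
    simp only [Finset.mem_sdiff, Finset.mem_univ, true_and, hmemT, hval_m]
    omega
  rw [Finset.sum_eq_single_of_mem (m : ZMod n) hmem]
  · -- value at m is nonzero
    simp only [hf]
    have e1 : (m : ZMod n) - iZ = ((Nf - 1 : ℕ) : ZMod n) := by
      rw [hiZ, hsub (m : ZMod n) i0 (by omega)]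
      congr 1
      omega
    have e2 : k - (m : ZMod n) = j0 := by rw [hk]; ring
    rw [e1, e2]
    exact mul_ne_zero hNfne hj0
  · -- other terms vanish
    intro x hx hxm
    simp only [Finset.mem_sdiff, Finset.mem_univ, true_and, hmemT] at hx
    have hxval : m + 1 ≤ x.val := by
      rcases Nat.lt_or_ge x.val (m + 1) with h1 | h1
      · exfalso
        have : x.val = m := by omega
        apply hxm
        rw [← ZMod.natCast_rightInverse x, this]
      · exact h1
    have hxlt : x.val < n := ZMod.val_lt x
    have : h (x - iZ) = 0 := by
      apply hsupp
      rw [hiZ, hsub x i0 (by omega), ZMod.val_cast_of_lt (by omega)]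
      omega
    simp [hf, this]
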